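/- Let A = [[0,1,0],[−1,0,−1],[0,1,0]] and let T = π/√2. Then exp(T·A) applied to the vector (0, 0, 1) equals (−1, 0, 0). -/

import Mathlib

open Matrix Real

noncomputable def Amat : Matrix (Fin 3) (Fin 3) ℝ := !![0, 1, 0; -1, 0, -1; 0, 1, 0]

lemma Amat_sq : Amat ^ 2 = !![-1,0,-1; 0,-2,0; -1,0,-1] := by
  rw [pow_two]
  ext i j
  fin_cases i <;> fin_cases j <;>
    simp [Amat, Matrix.mul_apply, Fin.sum_univ_succ] <;> ring

lemma Amat_cube : Amat ^ 3 = (-2 : ℝ) • Amat := by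
  rw [pow_succ, Amat_sq]
  ext i j
  fin_cases i <;> fin_cases j <;>
    simp [Amat, Matrix.mul_apply, Fin.sum_univ_succ] <;> ring

lemma Amat_pow_odd (k : ℕ) : Amat ^ (2 * k + 1) = ((-2 : ℝ) ^ k) • Amat := by
  induction k with
  | zero => simp
  | succ n ih =>
    calc Amat ^ (2 * (n + 1) + 1) = Amat ^ (2 * n + 1) * Amat ^ 2 := by
          rw [← pow_add]; ring_nf
      _ = ((-2 : ℝ) ^ n) • (Amat * Amat ^ 2) := by rw [ih, smul_mul_assoc]
      _ = ((-2 : ℝ) ^ n) • (Amat ^ 3) := by rw [show Amat * Amat ^ 2 = Amat ^ 3 by rw [← pow_succ']]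
      _ = ((-2 : ℝ) ^ (n + 1)) • Amat := by
          rw [Amat_cube, smul_smul, pow_succ, mul_comm]

lemma Amat_pow_even (k : ℕ) : Amat ^ (2 * k + 2) = ((-2 : ℝ) ^ k) • Amat ^ 2 := by
  have : 2 * k + 2 = (2 * k + 1) + 1 := by ring
  rw [this, pow_succ, Amat_pow_odd, smul_mul_assoc, ← pow_two]

lemma sqrt_two_pow_even (k : ℕ) : (Real.sqrt 2) ^ (2 * k) = 2 ^ k := by
  rw [pow_mul, Real.sq_sqrt (by norm_num : (2:ℝ) ≥ 0)]

set_option maxHeartbeats 1000000 in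
lemma key : NormedSpace.exp ((Real.pi / Real.sqrt 2) • Amat) = 1 + Amat ^ 2 := by
  have hs2 : Real.sqrt 2 ≠ 0 := by positivity
  set T : ℝ := Real.pi / Real.sqrt 2 with hT
  rw [NormedSpace.exp_eq_tsum (𝕂 := ℝ)]
  refine HasSum.tsum_eq ?_
  have hodd : HasSum (fun k : ℕ => (((2 * k + 1).factorial⁻¹ : ℝ)) • (T • Amat) ^ (2 * k + 1))
      ((Real.sin Real.pi / Real.sqrt 2) • Amat) := by
    have h := ((Real.hasSum_sin Real.pi).div_const (Real.sqrt 2)).smul_const Amat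
    convert h using 2 with k
    rw [smul_pow, Amat_pow_odd, smul_smul, smul_smul]
    congr 1
    have h2 : (Real.sqrt 2) ^ (2 * k + 1) = 2 ^ k * Real.sqrt 2 := by
      rw [pow_succ, sqrt_two_pow_even]
    rw [hT, div_pow, h2, show ((-2:ℝ))^k = (-1)^k * 2^k by rw [← mul_pow]; norm_num]
    have hf : ((2 * k + 1).factorial : ℝ) ≠ 0 := by positivity
    have h2k : (2:ℝ) ^ k ≠ 0 := by positivity
    field_simp
  have hcos : HasSum (fun n : ℕ => (-1:ℝ) ^ (n+1) * Real.pi ^ (2 * (n+1)) / ((2 * (n+1)).factorial))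
      (-2 : ℝ) := by
    refine (hasSum_nat_add_iff (f := fun n : ℕ => (-1:ℝ) ^ n * Real.pi ^ (2 * n) / ((2 * n).factorial)) 1).mpr ?_
    have := Real.hasSum_cos Real.pi
    rw [Real.cos_pi] at this
    convert this using 1
    · rfl
    simp [Nat.factorial]
    norm_num
  have heven : HasSum (fun k : ℕ => (((2 * k).factorial⁻¹ : ℝ)) • (T • Amat) ^ (2 * k))
      (Amat ^ 2 + 1) := by
    have h := ((hcos.mul_left (-1/2)).smul_const (Amat ^ 2))
    have h' : HasSum (fun n : ℕ => (((2 * (n+1)).factorial⁻¹ : ℝ)) • (T • Amat) ^ (2 * (n+1)))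
        (Amat ^ 2) := by
      convert h using 2 with k
      · rw [show 2 * (k+1) = 2 * k + 2 by ring, smul_pow, Amat_pow_even, smul_smul, smul_smul]
        congr 1
        have h2 : (Real.sqrt 2) ^ (2 * k + 2) = 2 ^ (k+1) := by
          rw [show 2 * k + 2 = 2 * (k+1) by ring, sqrt_two_pow_even]
        rw [hT, div_pow, h2, show ((-2:ℝ))^k = (-1)^k * 2^k by rw [← mul_pow]; norm_num]
        have hf : ((2 * k + 2).factorial : ℝ) ≠ 0 := by positivity
        have h2k : (2:ℝ) ^ k ≠ 0 := by positivity
        rw [pow_succ]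
        field_simp
        ring
      · norm_num
    have := (hasSum_nat_add_iff (f := fun k : ℕ => (((2 * k).factorial⁻¹ : ℝ)) • (T • Amat) ^ (2 * k)) 1).mp
      h'
    convert this using 1
    · rfl
    simp
  have total := HasSum.even_add_odd
    (f := fun n : ℕ => ((n.factorial⁻¹ : ℝ)) • (T • Amat) ^ n) heven hodd
  rw [Real.sin_pi] at hodd total
  simp only [zero_div, zero_smul, add_zero] at total
  convert total using 1
  · rfl
  rw [add_comm]

theorem third_move :
    (NormedSpace.exp ((Real.pi / Real.sqrt 2) •
        (!![0, 1, 0; -1, 0, -1; 0, 1, 0] : Matrix (Fin 3) (Fin 3) ℝ))).mulVec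
      ![0, 0, 1] = ![-1, 0, 0] := by
  have : (!![0, 1, 0; -1, 0, -1; 0, 1, 0] : Matrix (Fin 3) (Fin 3) ℝ) = Amat := rfl
  rw [this, key, Amat_sq]
  funext i
  fin_cases i <;>
    simp [Matrix.mulVec, Matrix.one_apply, dotProduct, Fin.sum_univ_succ, Matrix.add_apply] <;>
    decide
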